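/- Let σ be a degree-preserving automorphism of F[α,β]. For a nonzero q ∈ F[α,β], Dis_σ(q) = +∞ if and only if q has a nonconstant semi-periodic factor. -/

import Mathlib

open MvPolynomial


open MvPolynomial

/-- The spread of two polynomials: the set of natural numbers `m` such that
`p` and `σ^m q` have a nontrivial (nonconstant) common factor. -/
def Spr {F : Type*} [Field F]
    (σ : MvPolynomial (Fin 2) F ≃ₐ[F] MvPolynomial (Fin 2) F)
    (p q : MvPolynomial (Fin 2) F) : Set ℕ :=
  {m | ∃ d : MvPolynomial (Fin 2) F, 0 < d.totalDegree ∧ d ∣ p ∧ d ∣ (σ ^ m) q}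

/-- The dispersion: `⊥` (playing the role of `-1`) if the spread is empty, its maximum
if finite nonempty, and `⊤` (i.e. `+∞`) if the spread is infinite. -/
noncomputable def Dis {F : Type*} [Field F]
    (σ : MvPolynomial (Fin 2) F ≃ₐ[F] MvPolynomial (Fin 2) F)
    (p q : MvPolynomial (Fin 2) F) : WithBot ℕ∞ :=
  sSup ((fun m : ℕ => ((m : ℕ∞) : WithBot ℕ∞)) '' Spr σ p q)

/-- A polynomial of total degree zero is a constant. -/
lemma aux_eq_C_of_totalDegree_eq_zero {F : Type*} [Field F]
    {p : MvPolynomial (Fin 2) F} (h : p.totalDegree = 0) :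
    p = C (coeff 0 p) := by
  rw [MvPolynomial.totalDegree_eq_zero_iff] at h
  ext m
  by_cases hm : m = 0
  · subst hm; simp
  · rw [MvPolynomial.coeff_C, if_neg (fun hh => hm hh.symm)]
    by_cases hs : m ∈ p.support
    · exfalso
      exact hm (Finsupp.ext fun x => h m hs x)
    · exact MvPolynomial.notMem_support_iff.mp hs

/-- Characterization of units in a bivariate polynomial ring over a field. -/
lemma aux_isUnit_iff {F : Type*} [Field F] {p : MvPolynomial (Fin 2) F} :
    IsUnit p ↔ ∃ c : F, c ≠ 0 ∧ p = C c := by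
  constructor
  · intro hp
    let e₁ := MvPolynomial.finSuccEquiv F 1
    obtain ⟨r, hr, hrp⟩ := Polynomial.isUnit_iff.mp (hp.map e₁)
    let e₂ := MvPolynomial.finSuccEquiv F 0
    obtain ⟨s, hs, hsr⟩ := Polynomial.isUnit_iff.mp (hr.map e₂)
    let e₃ := MvPolynomial.isEmptyAlgEquiv F (Fin 0)
    set c := e₃ s with hc
    have hs' : s = MvPolynomial.C c := by
      have := e₃.symm_apply_apply s
      rw [← this, hc]
      have : e₃.symm (e₃ s) = e₃.symm (algebraMap F F (e₃ s)) := by simp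
      rw [this, AlgEquiv.commutes]
      rfl
    have hrc : r = MvPolynomial.C c := by
      have h2 : e₂ r = algebraMap F (Polynomial (MvPolynomial (Fin 0) F)) c := by
        rw [← hsr, hs', Polynomial.algebraMap_apply, MvPolynomial.algebraMap_eq]
      have h3 := congrArg e₂.symm h2
      rw [e₂.symm_apply_apply, AlgEquiv.commutes e₂.symm] at h3
      rw [h3, MvPolynomial.algebraMap_eq]
    have hpc : p = MvPolynomial.C c := by
      have h2 : e₁ p = algebraMap F (Polynomial (MvPolynomial (Fin 1) F)) c := by
        rw [← hrp, hrc, Polynomial.algebraMap_apply, MvPolynomial.algebraMap_eq]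
      have h3 := congrArg e₁.symm h2
      rw [e₁.symm_apply_apply, AlgEquiv.commutes e₁.symm] at h3
      rw [h3, MvPolynomial.algebraMap_eq]
    refine ⟨c, ?_, hpc⟩
    intro hc0
    rw [hc0, map_zero] at hpc
    exact hp.ne_zero hpc
  · rintro ⟨c, hc, rfl⟩
    exact (isUnit_iff_ne_zero.mpr hc).map (C : F →+* MvPolynomial (Fin 2) F)

/-- A nonconstant polynomial is not a unit. -/
lemma aux_not_isUnit {F : Type*} [Field F] {p : MvPolynomial (Fin 2) F}
    (h : 0 < p.totalDegree) : ¬ IsUnit p := by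
  intro hu
  obtain ⟨c, -, rfl⟩ := aux_isUnit_iff.mp hu
  simp [MvPolynomial.totalDegree_C] at h

/-- Irreducible polynomials are nonconstant. -/
lemma aux_irreducible_totalDegree_pos {F : Type*} [Field F] {p : MvPolynomial (Fin 2) F}
    (h : Irreducible p) : 0 < p.totalDegree := by
  rcases Nat.eq_zero_or_pos p.totalDegree with h0 | h0
  · exfalso
    have hp := aux_eq_C_of_totalDegree_eq_zero h0
    have hc : coeff 0 p ≠ 0 := by
      intro hc0
      rw [hc0, map_zero] at hp
      exact h.ne_zero hp
    exact h.not_isUnit (aux_isUnit_iff.mpr ⟨coeff 0 p, hc, hp⟩)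
  · exact h0

theorem stmt10 {F : Type*} [Field F]
    (σ : MvPolynomial (Fin 2) F ≃ₐ[F] MvPolynomial (Fin 2) F)
    (hdeg : ∀ p : MvPolynomial (Fin 2) F, (σ p).totalDegree = p.totalDegree)
    (q : MvPolynomial (Fin 2) F) (hq : q ≠ 0) :
    Dis σ q q = ⊤ ↔
      ∃ p : MvPolynomial (Fin 2) F, p ∣ q ∧ 0 < p.totalDegree ∧
        ∃ k : ℕ, 0 < k ∧ ∃ c : F, c ≠ 0 ∧ (σ ^ k) p = C c * p := by
  classical
  constructor
  · -- forward direction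
    intro hDis
    -- Spr is infinite
    have hSpr : (Spr σ q q).Infinite := by
      intro hfin
      obtain ⟨N, hN⟩ := hfin.bddAbove
      have hle : Dis σ q q ≤ ((N : ℕ∞) : WithBot ℕ∞) := by
        rw [Dis]
        apply sSup_le
        rintro a ⟨m, hm, rfl⟩
        have : m ≤ N := hN hm
        show ((m : ℕ∞) : WithBot ℕ∞) ≤ ((N : ℕ∞) : WithBot ℕ∞)
        exact_mod_cast this
      have : ((N : ℕ∞) : WithBot ℕ∞) < ⊤ := by
        rw [← WithBot.coe_top]
        exact WithBot.coe_lt_coe.mpr (lt_top_iff_ne_top.mpr (ENat.coe_ne_top N))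
      rw [hDis] at hle
      exact absurd hle this.not_ge
    letI : NormalizationMonoid (MvPolynomial (Fin 2) F) := UniqueFactorizationMonoid.normalizationMonoid.toNormalizationMonoid
    -- for each m in Spr, choose an irreducible common factor
    have key : ∀ m ∈ Spr σ q q, ∃ e : MvPolynomial (Fin 2) F, Irreducible e ∧ e ∣ q ∧ ((σ ^ m).symm e) ∣ q := by
      intro m hm
      obtain ⟨d, hd, hdq, hdσ⟩ := hm
      have hd0 : d ≠ 0 := by
        rintro rfl
        rw [zero_dvd_iff] at hdq
        exact hq hdq
      obtain ⟨e, he, hed⟩ :=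
        WfDvdMonoid.exists_irreducible_factor (aux_not_isUnit hd) hd0
      refine ⟨e, he, hed.trans hdq, ?_⟩
      have := map_dvd ((σ ^ m).symm : MvPolynomial (Fin 2) F ≃ₐ[F] MvPolynomial (Fin 2) F) (hed.trans hdσ)
      rwa [(σ ^ m).symm_apply_apply] at this
    choose e he_irr he_dvd he_dvd' using key
    -- the pigeonhole map
    set f : ℕ → MvPolynomial (Fin 2) F × MvPolynomial (Fin 2) F := fun m =>
      if h : m ∈ Spr σ q q
      then (normalize (e m h), normalize ((σ ^ m).symm (e m h)))
      else (1, 1) with hf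
    have hmaps : Set.MapsTo f (Spr σ q q)
        (((UniqueFactorizationMonoid.normalizedFactors q).toFinset : Set (MvPolynomial (Fin 2) F)) ×ˢ
         ((UniqueFactorizationMonoid.normalizedFactors q).toFinset : Set (MvPolynomial (Fin 2) F))) := by
      intro m hm
      rw [hf]
      simp only [dif_pos hm]
      constructor
      · obtain ⟨g, hg, hassoc⟩ :=
          UniqueFactorizationMonoid.exists_mem_normalizedFactors_of_dvd hq
            (he_irr m hm) (he_dvd m hm)
        have : normalize (e m hm) = g := by
          rw [normalize_eq_normalize_iff.mpr ⟨hassoc.dvd, hassoc.symm.dvd⟩]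
          exact UniqueFactorizationMonoid.normalize_normalized_factor _ hg
        rw [this]
        exact Finset.mem_coe.mpr (Multiset.mem_toFinset.mpr hg)
      · obtain ⟨g, hg, hassoc⟩ :=
          UniqueFactorizationMonoid.exists_mem_normalizedFactors_of_dvd hq
            ((he_irr m hm).map ((σ ^ m).symm : MvPolynomial (Fin 2) F ≃ₐ[F] MvPolynomial (Fin 2) F)) (he_dvd' m hm)
        have : normalize ((σ ^ m).symm (e m hm)) = g := by
          rw [normalize_eq_normalize_iff.mpr ⟨hassoc.dvd, hassoc.symm.dvd⟩]
          exact UniqueFactorizationMonoid.normalize_normalized_factor _ hg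
        rw [this]
        exact Finset.mem_coe.mpr (Multiset.mem_toFinset.mpr hg)
    obtain ⟨m, hm, m', hm', hlt, hfeq⟩ :=
      hSpr.exists_lt_map_eq_of_mapsTo hmaps
        (((UniqueFactorizationMonoid.normalizedFactors q).toFinset.finite_toSet).prod
          ((UniqueFactorizationMonoid.normalizedFactors q).toFinset.finite_toSet))
    rw [hf] at hfeq
    simp only [dif_pos hm, dif_pos hm', Prod.mk.injEq] at hfeq
    obtain ⟨hfeq1, hfeq2⟩ := hfeq
    -- Set up associated elements
    have hee' : Associated (e m hm) (e m' hm') := by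
      rw [normalize_eq_normalize_iff] at hfeq1
      exact associated_of_dvd_dvd hfeq1.1 hfeq1.2
    have hss' : Associated ((σ ^ m).symm (e m hm)) ((σ ^ m').symm (e m' hm')) := by
      rw [normalize_eq_normalize_iff] at hfeq2
      exact associated_of_dvd_dvd hfeq2.1 hfeq2.2
    set p := e m hm with hp
    have h2 : Associated ((σ ^ m).symm p) ((σ ^ m').symm p) :=
      hss'.trans (hee'.symm.map ((σ ^ m').symm : MvPolynomial (Fin 2) F ≃ₐ[F] MvPolynomial (Fin 2) F))
    have h3 : Associated ((σ ^ m') ((σ ^ m).symm p)) p := by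
      have := h2.map ((σ ^ m') : MvPolynomial (Fin 2) F ≃ₐ[F] MvPolynomial (Fin 2) F)
      rwa [(σ ^ m').apply_symm_apply] at this
    have hpow : (σ ^ m') ((σ ^ m).symm p) = (σ ^ (m' - m)) p := by
      have hm'eq : σ ^ m' = σ ^ (m' - m) * σ ^ m := by
        rw [← pow_add, Nat.sub_add_cancel hlt.le]
      rw [hm'eq, AlgEquiv.mul_apply, (σ ^ m).apply_symm_apply]
    rw [hpow] at h3
    obtain ⟨u, hu⟩ := h3
    obtain ⟨c, hc, hcu⟩ := aux_isUnit_iff.mp (u⁻¹ : (MvPolynomial (Fin 2) F)ˣ).isUnit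
    refine ⟨p, he_dvd m hm, aux_irreducible_totalDegree_pos (he_irr m hm),
      m' - m, Nat.sub_pos_of_lt hlt, c, hc, ?_⟩
    have h5 : (σ ^ (m' - m)) p = p * ↑u⁻¹ :=
      ((Units.mul_inv_eq_iff_eq_mul u).mpr hu.symm).symm
    rw [h5, hcu, mul_comm]
  · -- backward direction
    rintro ⟨p, hpq, hpdeg, k, hk, c, hc, hper⟩
    -- iterate semi-periodicity
    have hiter : ∀ j : ℕ, (σ ^ (j * k)) p = C (c ^ j) * p := by
      intro j
      induction j with
      | zero => simp
      | succ j ih =>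
        have : (j + 1) * k = j * k + k := by ring
        rw [this, pow_add, AlgEquiv.mul_apply, hper, map_mul, ih]
        have hC : (σ ^ (j * k)) (C c) = C c := by
          have : (C c : MvPolynomial (Fin 2) F) = algebraMap F _ c := rfl
          rw [this, AlgEquiv.commutes]
        rw [hC, pow_succ', map_mul, mul_assoc]
    have hmem : ∀ j : ℕ, j * k ∈ Spr σ q q := by
      intro j
      refine ⟨p, hpdeg, hpq, ?_⟩
      have h1 : (σ ^ (j * k)) p ∣ (σ ^ (j * k)) q :=
        map_dvd ((σ ^ (j * k)) : MvPolynomial (Fin 2) F ≃ₐ[F] MvPolynomial (Fin 2) F) hpq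
      have h2 : p ∣ (σ ^ (j * k)) p := by
        rw [hiter j]
        exact Dvd.intro_left _ rfl
      exact h2.trans h1
    rw [Dis, sSup_eq_top]
    intro b hb
    -- b < ⊤ in WithBot ℕ∞
    cases b with
    | bot =>
      exact ⟨((1 * k : ℕ) : ℕ∞), ⟨1 * k, hmem 1, rfl⟩, by
        exact_mod_cast WithBot.bot_lt_coe _⟩
    | coe t =>
      have ht : t ≠ ⊤ := by
        intro h
        rw [h] at hb
        exact absurd hb (lt_irrefl _)
      obtain ⟨n, rfl⟩ := WithTop.ne_top_iff_exists.mp ht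
      refine ⟨(((n + 1) * k : ℕ) : ℕ∞), ⟨(n + 1) * k, hmem (n + 1), rfl⟩, ?_⟩
      have hlt : n < (n + 1) * k := by
        calc n < n + 1 := Nat.lt_succ_self n
        _ ≤ (n + 1) * k := Nat.le_mul_of_pos_right _ hk
      exact WithBot.coe_lt_coe.mpr (Nat.cast_lt.mpr hlt)
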